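/- Let G_0 = {0} and G_n = (Γ_N ∘ Φ)^n(G_0) for n ≥ 1. Then e(G_n, V*) ≤ β^n and e(V*, G_n) ≤ (1/N)·(1−β^n)/(1−β) + β^n; consequently d(V*, G_n) ≤ (1/N)·(1−β^n)/(1−β) + β^n. -/

import Mathlib

/-- The upset of `A` within `[0,1]^K`: points of `[0,1]^K` dominating some point of `A`. -/
def upset (K : ℕ) (A : Set (Fin K → ℝ)) : Set (Fin K → ℝ) :=
  {x | x ∈ Set.Icc (0 : Fin K → ℝ) 1 ∧ ∃ y ∈ A, y ≤ x}

/-- Membership in the space `𝓕`: a nonempty Pareto frontier in `[0,1]^K`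
(no element dominates a different element) whose upset is closed and convex. -/
def memF (K : ℕ) (V : Set (Fin K → ℝ)) : Prop :=
  V.Nonempty ∧ V ⊆ Set.Icc (0 : Fin K → ℝ) 1 ∧
    (∀ u ∈ V, ∀ v ∈ V, u ≤ v → u = v) ∧
    IsClosed (upset K V) ∧ Convex ℝ (upset K V)

/-- The metric `d` on `𝓕`: Hausdorff distance (for the ℓ∞ norm) between upsets. -/
noncomputable def dF (K : ℕ) (U V : Set (Fin K → ℝ)) : ℝ :=
  Metric.hausdorffDist (upset K U) (upset K V)

/-- `e(U,V)`: the least `ε ≥ 0` such that every `u ∈ U` `ε`-dominates some `v ∈ V`. -/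
noncomputable def eDom (K : ℕ) (U V : Set (Fin K → ℝ)) : ℝ :=
  sInf {ε : ℝ | 0 ≤ ε ∧ ∀ u ∈ U, ∃ v ∈ V, ∀ i, v i ≤ u i + ε}

/-- The lower Pareto frontier `Λ(S)`: the minimal elements of `S` in the
coordinatewise order, i.e. the elements of `S` dominating no other element of `S`. -/
def pareto (K : ℕ) (S : Set (Fin K → ℝ)) : Set (Fin K → ℝ) :=
  {x ∈ S | ∀ y ∈ S, y ≤ x → y = x}

/-- The probability simplex over `Fin m`. -/
def simplex (m : ℕ) : Set (Fin m → ℝ) :=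
  {α | (∀ a, 0 ≤ α a) ∧ ∑ a, α a = 1}

/-- The one-stage operator `Ψ`. -/
def psi (K m n : ℕ) (hn : 0 < n) (β : ℝ) (r : Fin K → Fin m → Fin n → ℝ)
    (S : Set (Fin K → ℝ)) : Set (Fin K → ℝ) :=
  {u | ∃ α ∈ simplex m, ∃ R : Fin m → Fin n → Fin K → ℝ,
    (∀ a b, R a b ∈ S) ∧
    ∀ k, u k = Finset.univ.sup'
      (Finset.univ_nonempty_iff.mpr (Fin.pos_iff_nonempty.mp hn))
      (fun b => ∑ a, α a * (r k a b + β * R a b k))}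

/-- The parameter set `𝒫`: vectors in `[0,1]^K` with at least one zero coordinate. -/
def paramSet (K : ℕ) : Set (Fin K → ℝ) :=
  {p | (∀ i, p i ∈ Set.Icc (0:ℝ) 1) ∧ ∃ k, p k = 0}

/-- `F(p,V) = t*·1 + p`, where `t*` is the smallest `t` such that `t·1 + p` lies in
the upset of `V` taken in `[0,2]^K`. -/
noncomputable def Fparam (K : ℕ) (p : Fin K → ℝ) (V : Set (Fin K → ℝ)) : Fin K → ℝ :=
  fun i =>
    sInf {t : ℝ | (∀ j, 0 ≤ t + p j ∧ t + p j ≤ 2) ∧ ∃ y ∈ V, ∀ j, y j ≤ t + p j} + p i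

/-- The grid `𝒫_N ⊆ 𝒫`: coordinates restricted to `{0, 1/N, …, 1}`. -/
def paramSetN (K N : ℕ) : Set (Fin K → ℝ) :=
  {p | p ∈ paramSet K ∧ ∀ i, ∃ j : ℕ, j ≤ N ∧ p i = (j : ℝ) / N}

/-- The approximation operator `Γ_N`: Pareto frontier of the closed convex hull of
`{F(p,V) : p ∈ 𝒫_N}`. -/
noncomputable def gammaN (K N : ℕ) (V : Set (Fin K → ℝ)) : Set (Fin K → ℝ) :=
  pareto K (closure (convexHull ℝ ((fun p => Fparam K p V) '' paramSetN K N)))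

namespace Stmt13

variable {K m n : ℕ}

noncomputable def val (hn : 0 < n) (β : ℝ) (r : Fin K → Fin m → Fin n → ℝ)
    (α : Fin m → ℝ) (R : Fin m → Fin n → Fin K → ℝ) : Fin K → ℝ :=
  fun k => Finset.univ.sup'
    (Finset.univ_nonempty_iff.mpr (Fin.pos_iff_nonempty.mp hn))
    (fun b => ∑ a, α a * (r k a b + β * R a b k))

lemma mem_psi_iff {hn : 0 < n} {β : ℝ} {r : Fin K → Fin m → Fin n → ℝ}
    {S : Set (Fin K → ℝ)} {u : Fin K → ℝ} :
    u ∈ psi K m n hn β r S ↔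
      ∃ α ∈ simplex m, ∃ R : Fin m → Fin n → Fin K → ℝ,
        (∀ a b, R a b ∈ S) ∧ u = val hn β r α R := by
  constructor
  · rintro ⟨α, hα, R, hR, hu⟩; exact ⟨α, hα, R, hR, funext hu⟩
  · rintro ⟨α, hα, R, hR, rfl⟩; exact ⟨α, hα, R, hR, fun k => rfl⟩

lemma val_mem_psi {hn : 0 < n} {β : ℝ} {r : Fin K → Fin m → Fin n → ℝ}
    {S : Set (Fin K → ℝ)} {α : Fin m → ℝ} {R : Fin m → Fin n → Fin K → ℝ}
    (hα : α ∈ simplex m) (hR : ∀ a b, R a b ∈ S) :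
    val hn β r α R ∈ psi K m n hn β r S :=
  ⟨α, hα, R, hR, fun _ => rfl⟩

lemma psi_mono {hn : 0 < n} {β : ℝ} {r : Fin K → Fin m → Fin n → ℝ}
    {S T : Set (Fin K → ℝ)} (h : S ⊆ T) :
    psi K m n hn β r S ⊆ psi K m n hn β r T := by
  rintro u ⟨α, hα, R, hR, hu⟩
  exact ⟨α, hα, R, fun a b => h (hR a b), hu⟩

lemma pareto_subset (S : Set (Fin K → ℝ)) : pareto K S ⊆ S := fun _ hx => hx.1

lemma val_le_of_pointwise {hn : 0 < n} {β : ℝ} {r : Fin K → Fin m → Fin n → ℝ}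
    (hβ0 : 0 ≤ β) {α : Fin m → ℝ} {R R' : Fin m → Fin n → Fin K → ℝ}
    (hα : α ∈ simplex m) {ε : ℝ}
    (h : ∀ a b k, R' a b k ≤ R a b k + ε) (k : Fin K) :
    val hn β r α R' k ≤ val hn β r α R k + β * ε := by
  apply Finset.sup'_le
  intro b _
  have h1 : ∑ a, α a * (r k a b + β * R' a b k)
      ≤ (∑ a, α a * (r k a b + β * R a b k)) + β * ε := by
    have hstep : ∀ a ∈ Finset.univ,
        α a * (r k a b + β * R' a b k) ≤ α a * (r k a b + β * R a b k) + α a * (β * ε) := by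
      intro a _
      have h2 := mul_le_mul_of_nonneg_left (h a b k) (mul_nonneg (hα.1 a) hβ0)
      nlinarith [hα.1 a]
    calc ∑ a, α a * (r k a b + β * R' a b k)
        ≤ ∑ a, (α a * (r k a b + β * R a b k) + α a * (β * ε)) := Finset.sum_le_sum hstep
      _ = (∑ a, α a * (r k a b + β * R a b k)) + (∑ a, α a) * (β * ε) := by
          rw [Finset.sum_add_distrib, Finset.sum_mul]
      _ = (∑ a, α a * (r k a b + β * R a b k)) + β * ε := by rw [hα.2, one_mul]
  exact h1.trans (add_le_add_left (Finset.le_sup'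
    (fun b => ∑ a, α a * (r k a b + β * R a b k)) (Finset.mem_univ b)) (β * ε))

lemma val_nonneg {hn : 0 < n} {β : ℝ} {r : Fin K → Fin m → Fin n → ℝ}
    (hβ0 : 0 ≤ β) {α : Fin m → ℝ} {R : Fin m → Fin n → Fin K → ℝ}
    (hα : α ∈ simplex m) (hr0 : ∀ k a b, 0 ≤ r k a b) (hR0 : ∀ a b k, 0 ≤ R a b k)
    (k : Fin K) : 0 ≤ val hn β r α R k := by
  have hb : (⟨0, hn⟩ : Fin n) ∈ Finset.univ := Finset.mem_univ _
  refine le_trans ?_ (Finset.le_sup' (fun b => ∑ a, α a * (r k a b + β * R a b k)) hb)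
  apply Finset.sum_nonneg
  intro a _
  exact mul_nonneg (hα.1 a) (add_nonneg (hr0 k a _) (mul_nonneg hβ0 (hR0 a _ k)))

lemma val_le_one {hn : 0 < n} {β : ℝ} {r : Fin K → Fin m → Fin n → ℝ}
    (hβ0 : 0 ≤ β) {α : Fin m → ℝ} {R : Fin m → Fin n → Fin K → ℝ}
    (hα : α ∈ simplex m) (hr1 : ∀ k a b, r k a b ≤ 1 - β) (hR1 : ∀ a b k, R a b k ≤ 1)
    (k : Fin K) : val hn β r α R k ≤ 1 := by
  apply Finset.sup'_le
  intro b _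
  calc ∑ a, α a * (r k a b + β * R a b k) ≤ ∑ a, α a * 1 := by
        apply Finset.sum_le_sum
        intro a _
        apply mul_le_mul_of_nonneg_left _ (hα.1 a)
        have := hr1 k a b
        have := mul_le_mul_of_nonneg_left (hR1 a b k) hβ0
        linarith
    _ = 1 := by simp [hα.2]


lemma exists_pareto_le {S : Set (Fin K → ℝ)} (hS : IsCompact S) {x : Fin K → ℝ}
    (hx : x ∈ S) : ∃ y, y ∈ pareto K S ∧ y ≤ x := by
  classical
  have hIic : IsClosed {z : Fin K → ℝ | z ≤ x} := by
    have : {z : Fin K → ℝ | z ≤ x} = ⋂ k, {z : Fin K → ℝ | z k ≤ x k} := by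
      ext z; simp [Pi.le_def, Set.mem_iInter]
    rw [this]
    exact isClosed_iInter fun k => isClosed_le (continuous_apply k) continuous_const
  have hTc : IsCompact (S ∩ {z | z ≤ x}) := hS.inter_right hIic
  have hTne : (S ∩ {z : Fin K → ℝ | z ≤ x}).Nonempty := ⟨x, hx, le_refl x⟩
  have hcont : Continuous (fun z : Fin K → ℝ => ∑ k, z k) :=
    continuous_finset_sum _ fun k _ => continuous_apply k
  obtain ⟨y, hyT, hymin⟩ := hTc.exists_isMinOn hTne hcont.continuousOn
  refine ⟨y, ⟨hyT.1, ?_⟩, hyT.2⟩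
  intro z hzS hzy
  have hzT : z ∈ S ∩ {z : Fin K → ℝ | z ≤ x} := ⟨hzS, le_trans hzy hyT.2⟩
  have hsum : ∑ k, y k ≤ ∑ k, z k := hymin hzT
  funext k
  by_contra hne
  have hlt : z k < y k := lt_of_le_of_ne (hzy k) hne
  have : ∑ k, z k < ∑ k, y k :=
    Finset.sum_lt_sum (fun i _ => hzy i) ⟨k, Finset.mem_univ k, hlt⟩
  linarith

lemma psi_isCompact (hn : 0 < n) {β : ℝ} {r : Fin K → Fin m → Fin n → ℝ}
    {S : Set (Fin K → ℝ)} (hS : IsCompact S) :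
    IsCompact (psi K m n hn β r S) := by
  have himg : psi K m n hn β r S =
      (fun q : (Fin m → ℝ) × (Fin m → Fin n → Fin K → ℝ) => val hn β r q.1 q.2) ''
        ((simplex m) ×ˢ Set.pi Set.univ (fun _ : Fin m =>
          Set.pi Set.univ (fun _ : Fin n => S))) := by
    ext u
    rw [mem_psi_iff]
    constructor
    · rintro ⟨α, hα, R, hR, rfl⟩
      refine ⟨(α, R), ⟨hα, ?_⟩, rfl⟩
      intro a _
      intro b _
      exact hR a b
    · rintro ⟨⟨α, R⟩, ⟨hα, hR⟩, rfl⟩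
      exact ⟨α, hα, R, fun a b => hR a (Set.mem_univ a) b (Set.mem_univ b), rfl⟩
  rw [himg]
  apply IsCompact.image
  · apply IsCompact.prod
    · have h : simplex m = stdSimplex ℝ (Fin m) := rfl
      rw [h]; exact isCompact_stdSimplex _ _
    · exact isCompact_univ_pi fun _ => isCompact_univ_pi fun _ => hS
  · apply continuous_pi
    intro k
    apply Continuous.finset_sup'_apply
    intro b _
    apply continuous_finset_sum
    intro a _
    exact ((continuous_apply a).comp continuous_fst).mul
      (continuous_const.add (continuous_const.mul ((continuous_apply k).comp
        ((continuous_apply b).comp ((continuous_apply a).comp continuous_snd)))))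

lemma key (hn : 0 < n) {β : ℝ} {r : Fin K → Fin m → Fin n → ℝ} (hβ0 : 0 ≤ β)
    {D : Set (Fin K → ℝ)} (hD : IsCompact D) {w : Fin K → ℝ}
    (hw : w ∈ psi K m n hn β r (pareto K D)) :
    ∃ y, y ∈ pareto K (psi K m n hn β r (pareto K D)) ∧ y ≤ w := by
  have hw' : w ∈ psi K m n hn β r D := psi_mono (pareto_subset D) hw
  obtain ⟨yb, hybp, hybw⟩ := exists_pareto_le (psi_isCompact hn hD) hw'
  obtain ⟨α, hα, R, hR, hyb⟩ := mem_psi_iff.mp hybp.1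
  choose R' hR'p hR'le using fun a b => exists_pareto_le hD (hR a b)
  have hle : val hn β r α R' ≤ yb := by
    intro k
    have := val_le_of_pointwise (hn := hn) (r := r) hβ0 hα
      (R := R) (R' := R') (ε := 0) (fun a b k => by simpa using hR'le a b k) k
    rw [hyb]
    simpa using this
  have hmem : val hn β r α R' ∈ psi K m n hn β r D :=
    psi_mono (pareto_subset D) (val_mem_psi hα hR'p)
  have heq : val hn β r α R' = yb := hybp.2 _ hmem hle
  have hybmem : yb ∈ psi K m n hn β r (pareto K D) := by
    rw [← heq]; exact val_mem_psi hα hR'p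
  refine ⟨yb, ⟨hybmem, ?_⟩, hybw⟩
  intro z hz hzyb
  exact hybp.2 z (psi_mono (pareto_subset D) hz) hzyb


/-- the defining set for `Fparam` -/
def tset (K : ℕ) (p : Fin K → ℝ) (W : Set (Fin K → ℝ)) : Set ℝ :=
  {t : ℝ | (∀ j, 0 ≤ t + p j ∧ t + p j ≤ 2) ∧ ∃ y ∈ W, ∀ j, y j ≤ t + p j}

lemma Fparam_def (p : Fin K → ℝ) (W : Set (Fin K → ℝ)) (i : Fin K) :
    Fparam K p W i = sInf (tset K p W) + p i := rfl

lemma tset_nonneg {p : Fin K → ℝ} {W : Set (Fin K → ℝ)} (hp : ∃ k, p k = 0) :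
    ∀ t ∈ tset K p W, 0 ≤ t := by
  rintro t ⟨hbox, -⟩
  obtain ⟨k, hk⟩ := hp
  have := (hbox k).1
  rw [hk] at this
  linarith

lemma Fparam_le {p : Fin K → ℝ} {W : Set (Fin K → ℝ)} (hp : ∃ k, p k = 0)
    {t : ℝ} (ht : t ∈ tset K p W) (i : Fin K) :
    Fparam K p W i ≤ t + p i := by
  rw [Fparam_def]
  have hbdd : BddBelow (tset K p W) := ⟨0, fun s hs => tset_nonneg hp s hs⟩
  exact add_le_add_left (csInf_le hbdd ht) _

lemma Fparam_nonneg {p : Fin K → ℝ} {W : Set (Fin K → ℝ)} (hp : ∃ k, p k = 0)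
    (hp0 : ∀ i, 0 ≤ p i) (i : Fin K) : 0 ≤ Fparam K p W i := by
  rw [Fparam_def]
  exact add_nonneg (Real.sInf_nonneg (tset_nonneg hp)) (hp0 i)

lemma exists_W_le_Fparam {p : Fin K → ℝ} {W : Set (Fin K → ℝ)}
    (hne : (tset K p W).Nonempty) {δ : ℝ} (hδ : 0 < δ) :
    ∃ y ∈ W, ∀ i, y i ≤ Fparam K p W i + δ := by
  obtain ⟨t, ht, hlt⟩ := Real.lt_sInf_add_pos hne hδ
  obtain ⟨y, hyW, hy⟩ := ht.2
  refine ⟨y, hyW, fun i => ?_⟩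
  rw [Fparam_def]
  have := hy i
  linarith

/-- The grid construction: for `y ∈ [0,1]^K` there are a grid vector `p ∈ 𝒫_N` and `t ≥ 0`
with `y ≤ t·1 + p ≤ min (y + 1/N, 1)` coordinatewise. -/
lemma grid_exists {K N : ℕ} (hK : 0 < K) (hN : 0 < N) (y : Fin K → ℝ)
    (h0 : ∀ k, 0 ≤ y k) (h1 : ∀ k, y k ≤ 1) :
    ∃ p ∈ paramSetN K N, ∃ t : ℝ, 0 ≤ t ∧ (∀ k, y k ≤ t + p k) ∧
      (∀ k, t + p k ≤ y k + 1 / N ∧ t + p k ≤ 1) := by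
  classical
  have hNR : (0:ℝ) < N := by exact_mod_cast hN
  haveI : Nonempty (Fin K) := ⟨⟨0, hK⟩⟩
  obtain ⟨k₀, -, hk₀⟩ := Finset.exists_min_image Finset.univ y ⟨⟨0, hK⟩, Finset.mem_univ _⟩
  have hμ0 : 0 ≤ y k₀ := h0 k₀
  have hμ1 : y k₀ ≤ 1 := h1 k₀
  have hμle : ∀ k, y k₀ ≤ y k := fun k => hk₀ k (Finset.mem_univ k)
  set c : ℕ := ⌈y k₀ * N⌉₊ with hc
  have hcN : c ≤ N := by
    rw [hc]
    refine Nat.ceil_le.mpr ?_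
    calc y k₀ * N ≤ 1 * N := by nlinarith
      _ = (N:ℝ) := one_mul _
  set t : ℝ := (c : ℝ) / N with htdef
  have ht0 : 0 ≤ t := by positivity
  have htμ : y k₀ ≤ t := by
    rw [htdef, le_div_iff₀ hNR]
    exact Nat.le_ceil _
  have htμ' : t ≤ y k₀ + 1 / N := by
    rw [htdef, div_le_iff₀ hNR]
    have h2 : (c:ℝ) < y k₀ * N + 1 := Nat.ceil_lt_add_one (by positivity)
    calc (c:ℝ) ≤ y k₀ * N + 1 := le_of_lt h2
      _ = (y k₀ + 1/N) * N := by field_simp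
  have ht1 : t ≤ 1 := by
    rw [htdef, div_le_one hNR]
    exact_mod_cast hcN
  set p : Fin K → ℝ := fun k =>
    if y k ≤ t then 0 else if 1 - 1/N < y k then 1 - t
    else (⌈(y k - t) * N⌉₊ : ℝ) / N with hp
  have hp_cases : ∀ k, (∃ j : ℕ, j ≤ N ∧ p k = (j:ℝ)/N) := by
    intro k
    simp only [hp]
    by_cases hk1 : y k ≤ t
    · exact ⟨0, Nat.zero_le _, by rw [if_pos hk1]; simp⟩
    · by_cases hk2 : 1 - 1/N < y k
      · refine ⟨N - c, Nat.sub_le _ _, ?_⟩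
        rw [if_neg hk1, if_pos hk2, Nat.cast_sub hcN, htdef]
        field_simp
      · refine ⟨⌈(y k - t) * N⌉₊, ?_, by rw [if_neg hk1, if_neg hk2]⟩
        refine Nat.ceil_le.mpr ?_
        have h3 : y k - t ≤ 1 := by linarith [h1 k]
        nlinarith
  have hp0 : ∀ k, 0 ≤ p k := by
    intro k
    obtain ⟨j, -, hj⟩ := hp_cases k
    rw [hj]; positivity
  have hp1 : ∀ k, p k ≤ 1 := by
    intro k
    obtain ⟨j, hjN, hj⟩ := hp_cases k
    rw [hj, div_le_one hNR]
    exact_mod_cast hjN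
  have hlow : ∀ k, y k ≤ t + p k := by
    intro k
    simp only [hp]
    by_cases hk1 : y k ≤ t
    · rw [if_pos hk1]; linarith
    · by_cases hk2 : 1 - 1/N < y k
      · rw [if_neg hk1, if_pos hk2]
        have := h1 k; linarith
      · rw [if_neg hk1, if_neg hk2]
        have h3 : (y k - t) * N ≤ (⌈(y k - t) * N⌉₊ : ℝ) := Nat.le_ceil _
        have h4 : y k - t ≤ (⌈(y k - t) * N⌉₊ : ℝ) / N := (le_div_iff₀ hNR).mpr h3
        linarith
  have hup : ∀ k, t + p k ≤ y k + 1 / N ∧ t + p k ≤ 1 := by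
    intro k
    simp only [hp]
    by_cases hk1 : y k ≤ t
    · rw [if_pos hk1]
      constructor
      · have := hμle k; linarith
      · linarith
    · push_neg at hk1
      by_cases hk2 : 1 - 1/N < y k
      · rw [if_neg (not_le.mpr hk1), if_pos hk2]
        constructor
        · linarith
        · linarith
      · push_neg at hk2
        rw [if_neg (not_le.mpr hk1), if_neg (not_lt.mpr hk2)]
        have harg : (0:ℝ) ≤ (y k - t) * N := by nlinarith
        have h4 : (⌈(y k - t) * N⌉₊ : ℝ) < (y k - t) * N + 1 := Nat.ceil_lt_add_one harg
        have h5 : (⌈(y k - t) * N⌉₊ : ℝ) / N ≤ (y k - t) + 1/N := by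
          rw [div_le_iff₀ hNR]
          calc (⌈(y k - t) * N⌉₊ : ℝ) ≤ (y k - t) * N + 1 := le_of_lt h4
            _ = (y k - t + 1/N) * N := by field_simp
        constructor
        · linarith
        · have h6 : (1:ℝ)/N > 0 := by positivity
          linarith
  refine ⟨p, ⟨⟨fun i => ⟨hp0 i, hp1 i⟩, ⟨k₀, ?_⟩⟩, hp_cases⟩, t, ht0, hlow, hup⟩
  simp only [hp]
  rw [if_pos htμ]

/-- the error constant sequence -/
noncomputable def cseq (β : ℝ) (N : ℕ) (j : ℕ) : ℝ :=
  (1/N) * ((1 - β^j)/(1-β)) + β^j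

end Stmt13

open Stmt13

/-- with `G_0 = {0}` and `G_{j+1} = Γ_N(Φ(G_j))`, and `V*` the fixed
point of `Φ`: `e(G_j, V*) ≤ β^j`, `e(V*, G_j) ≤ (1/N)(1-β^j)/(1-β) + β^j`, and
consequently `d(V*, G_j) ≤ (1/N)(1-β^j)/(1-β) + β^j`. -/
theorem gammaN_phi_iterates_approx {K m n : ℕ} (hK : 0 < K) (hm : 0 < m) (hn : 0 < n)
    (β : ℝ) (hβ : β ∈ Set.Ico (0:ℝ) 1)
    (r : Fin K → Fin m → Fin n → ℝ) (hr : ∀ k a b, r k a b ∈ Set.Icc (0:ℝ) (1 - β))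
    (N : ℕ) (hN : 0 < N)
    (Vstar : Set (Fin K → ℝ)) (hVstar : memF K Vstar)
    (hfix : pareto K (psi K m n hn β r Vstar) = Vstar)
    (G : ℕ → Set (Fin K → ℝ)) (hG0 : G 0 = {0})
    (hGsucc : ∀ j, G (j + 1) = gammaN K N (pareto K (psi K m n hn β r (G j)))) :
    ∀ j : ℕ,
      eDom K (G j) Vstar ≤ β ^ j ∧
      eDom K Vstar (G j) ≤ (1 / N) * ((1 - β ^ j) / (1 - β)) + β ^ j ∧
      dF K Vstar (G j) ≤ (1 / N) * ((1 - β ^ j) / (1 - β)) + β ^ j := by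
  classical
  obtain ⟨hB0, hB1⟩ := hβ
  obtain ⟨hVne, hVicc, hVanti, hVclosed, hVconv⟩ := hVstar
  have hr0 : ∀ k a b, 0 ≤ r k a b := fun k a b => (hr k a b).1
  have hr1 : ∀ k a b, r k a b ≤ 1 - β := fun k a b => (hr k a b).2
  have hNR : (0:ℝ) < N := by exact_mod_cast hN
  -- upset of Vstar is compact
  have hUsub : upset K Vstar ⊆ Set.Icc 0 1 := fun x hx => hx.1
  have hUc : IsCompact (upset K Vstar) :=
    IsCompact.of_isClosed_subset isCompact_Icc hVclosed hUsub
  -- Vstar is the Pareto frontier of its upset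
  have hVpar : Vstar = pareto K (upset K Vstar) := by
    apply Set.Subset.antisymm
    · intro v hv
      refine ⟨⟨hVicc hv, v, hv, le_refl v⟩, ?_⟩
      rintro z ⟨hzIcc, y, hyV, hyz⟩ hzv
      have hyv : y = v := hVanti y hyV v hv (le_trans hyz hzv)
      have hvz : v ≤ z := hyv ▸ hyz
      exact le_antisymm hzv hvz
    · rintro x ⟨⟨hxIcc, y, hyV, hyx⟩, hmin⟩
      have h : y = x := hmin y ⟨hVicc hyV, y, hyV, le_refl y⟩ hyx
      rw [← h]; exact hyV
  have hVsubpsi : Vstar ⊆ psi K m n hn β r Vstar := by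
    conv_lhs => rw [← hfix]
    exact pareto_subset _
  have hstar : ∀ x ∈ psi K m n hn β r Vstar, ∃ v ∈ Vstar, v ≤ x := by
    intro x hx
    have hx' : x ∈ psi K m n hn β r (pareto K (upset K Vstar)) := by
      rw [← hVpar]; exact hx
    obtain ⟨y, hyp, hyx⟩ := key hn hB0 hUc hx'
    rw [← hVpar, hfix] at hyp
    exact ⟨y, hyp, hyx⟩
  -- the constant sequence
  have h1β : (0:ℝ) < 1 - β := by linarith
  have hcs : ∀ j : ℕ, cseq β N j = (1/N) * ((1 - β^j)/(1-β)) + β^j := fun _ => rfl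
  have hpow1 : ∀ j : ℕ, β ^ j ≤ 1 := fun j => pow_le_one₀ hB0 (le_of_lt hB1)
  have hpow0 : ∀ j : ℕ, 0 ≤ β ^ j := fun j => pow_nonneg hB0 j
  have hcβ : ∀ j, β ^ j ≤ cseq β N j := by
    intro j
    rw [hcs]
    have h2 : 0 ≤ (1 - β^j)/(1-β) := div_nonneg (by linarith [hpow1 j]) (le_of_lt h1β)
    have h3 : 0 ≤ (1:ℝ)/N := by positivity
    nlinarith
  have hc0 : ∀ j, 0 ≤ cseq β N j := fun j => le_trans (hpow0 j) (hcβ j)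
  have hcrec : ∀ j, β * cseq β N j + 1/N = cseq β N (j+1) := by
    intro j
    rw [hcs, hcs]
    have hNne : (N:ℝ) ≠ 0 := ne_of_gt hNR
    have hβne : (1:ℝ) - β ≠ 0 := ne_of_gt h1β
    field_simp
    ring
  -- MAIN INDUCTION
  have main : ∀ j : ℕ,
      (∀ δ : ℝ, 0 < δ → ∀ u ∈ G j, ∃ v ∈ Vstar, ∀ k, v k ≤ u k + (β^j + δ)) ∧
      (∀ δ : ℝ, 0 < δ → ∀ v ∈ Vstar, ∃ g ∈ G j,
        ∀ k, g k ≤ v k + (cseq β N j + δ) ∧ g k ≤ 1) ∧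
      (∃ D : Set (Fin K → ℝ), IsCompact D ∧ (∀ z ∈ D, ∀ k, 0 ≤ z k) ∧
        G j = pareto K D) := by
    intro j
    induction j with
    | zero =>
      refine ⟨?_, ?_, {0}, isCompact_singleton, ?_, ?_⟩
      · intro δ hδ u hu
        rw [hG0, Set.mem_singleton_iff] at hu
        obtain ⟨v, hv⟩ := hVne
        refine ⟨v, hv, fun k => ?_⟩
        have hv1 := (hVicc hv).2 k
        rw [hu]
        simp only [Pi.zero_apply, pow_zero, Pi.one_apply] at *
        linarith
      · intro δ hδ v hv
        refine ⟨0, by rw [hG0]; rfl, fun k => ?_⟩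
        have hv0 := (hVicc hv).1 k
        have hcz : cseq β N 0 = 1 := by rw [hcs]; simp
        simp only [Pi.zero_apply, Pi.one_apply] at *
        constructor
        · rw [hcz]; linarith
        · norm_num
      · intro z hz k
        rw [Set.mem_singleton_iff] at hz
        rw [hz]; simp
      · rw [hG0]
        apply Set.Subset.antisymm
        · intro x hx
          refine ⟨hx, fun y hy _ => ?_⟩
          rw [Set.mem_singleton_iff] at hy hx
          rw [hy, hx]
        · exact pareto_subset _
    | succ j ih =>
      obtain ⟨ih1, ih2, D, hDc, hD0, hGD⟩ := ih
      have hGj0 : ∀ g ∈ G j, ∀ k, 0 ≤ g k := by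
        rw [hGD]; exact fun g hg => hD0 g (pareto_subset D hg)
      set W := pareto K (psi K m n hn β r (G j)) with hW
      set Fs := (fun p => Fparam K p W) '' paramSetN K N with hFs
      have hFsfin : Fs.Finite := by
        rw [hFs]
        apply Set.Finite.image
        have hsub : paramSetN K N ⊆
            (fun f : Fin K → Fin (N+1) => fun i => ((f i : ℕ) : ℝ)/N) '' Set.univ := by
          intro p hp
          choose jj hjj1 hjj2 using hp.2
          exact ⟨fun i => ⟨jj i, Nat.lt_succ_of_le (hjj1 i)⟩, Set.mem_univ _,
            by funext i; exact (hjj2 i).symm⟩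
        exact Set.Finite.subset (Set.finite_univ.image _) hsub
      have hHullc : IsCompact (convexHull ℝ Fs) := hFsfin.isCompact_convexHull (𝕜 := ℝ)
      have hCeq : closure (convexHull ℝ Fs) = convexHull ℝ Fs := hHullc.isClosed.closure_eq
      have hGsj : G (j+1) = pareto K (convexHull ℝ Fs) := by
        rw [hGsucc j]
        unfold gammaN
        rw [← hW, ← hFs, hCeq]
      -- nonnegativity on the hull
      have hFs0 : ∀ x ∈ Fs, ∀ k, 0 ≤ x k := by
        rw [hFs]
        rintro x ⟨p, hp, rfl⟩ k
        exact Fparam_nonneg hp.1.2 (fun i => (hp.1.1 i).1) k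
      have hC0 : ∀ x ∈ convexHull ℝ Fs, ∀ k, 0 ≤ x k := by
        have hconv : Convex ℝ {x : Fin K → ℝ | ∀ k, 0 ≤ x k} := by
          have hset : {x : Fin K → ℝ | ∀ k, 0 ≤ x k} = Set.Ici (0 : Fin K → ℝ) := by
            ext x; simp [Set.mem_Ici, Pi.le_def]
          rw [hset]; exact convex_Ici 0
        intro x hx
        exact convexHull_min hFs0 hconv hx
      -- the machinery producing a good point of W
      have hmach : ∀ v ∈ Vstar, ∀ δ : ℝ, 0 < δ → ∃ y ∈ W,
          (∀ k, 0 ≤ y k) ∧ (∀ k, y k ≤ 1) ∧ (∀ k, y k ≤ v k + β*(cseq β N j + δ)) := by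
        intro v hv δ hδ
        obtain ⟨α, hα, S, hS, hveq⟩ := mem_psi_iff.mp (hVsubpsi hv)
        choose g hgG hgle using fun a b => ih2 δ hδ (S a b) (hS a b)
        have hw1 : ∀ k, val hn β r α g k ≤ 1 :=
          val_le_one hB0 hα hr1 (fun a b k => (hgle a b k).2)
        have hw0 : ∀ k, 0 ≤ val hn β r α g k :=
          val_nonneg hB0 hα hr0 (fun a b k => hGj0 _ (hgG a b) k)
        have hwv : ∀ k, val hn β r α g k ≤ v k + β * (cseq β N j + δ) := by
          intro k
          have h2 := val_le_of_pointwise (hn := hn) (r := r) hB0 hα (R := S) (R' := g)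
            (ε := cseq β N j + δ) (fun a b k => (hgle a b k).1) k
          rw [hveq]
          exact h2
        have hwpsi : val hn β r α g ∈ psi K m n hn β r (pareto K D) := by
          rw [← hGD]; exact val_mem_psi hα hgG
        obtain ⟨y, hyp, hyw⟩ := key hn hB0 hDc hwpsi
        have hyW : y ∈ W := by rw [hW, hGD]; exact hyp
        have hy0 : ∀ k, 0 ≤ y k := by
          obtain ⟨αy, hαy, Ry, hRy, hyeq⟩ := mem_psi_iff.mp (pareto_subset _ hyp)
          rw [hyeq]
          exact val_nonneg hB0 hαy hr0
            (fun a b k => hD0 _ (pareto_subset D (hRy a b)) k)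
        exact ⟨y, hyW, hy0, fun k => le_trans (hyw k) (hw1 k),
          fun k => le_trans (hyw k) (hwv k)⟩
      -- a point of W below 1 → tset nonempty for every p
      obtain ⟨v₀, hv₀⟩ := hVne
      obtain ⟨y₀, hy₀W, hy₀0, hy₀1, -⟩ := hmach v₀ hv₀ 1 one_pos
      have htset1 : ∀ p ∈ paramSetN K N, (1:ℝ) ∈ tset K p W := by
        intro p hp
        exact ⟨fun i => ⟨by linarith [(hp.1.1 i).1], by linarith [(hp.1.1 i).2]⟩,
          y₀, hy₀W, fun i => by linarith [(hp.1.1 i).1, hy₀1 i]⟩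
      -- P2 at j+1
      have P2 : ∀ δ : ℝ, 0 < δ → ∀ v ∈ Vstar, ∃ g ∈ G (j+1),
          ∀ k, g k ≤ v k + (cseq β N (j+1) + δ) ∧ g k ≤ 1 := by
        intro δ hδ v hv
        obtain ⟨y, hyW, hy0, hy1, hyv⟩ := hmach v hv δ hδ
        obtain ⟨p, hpN, t, ht0, hlow, hup⟩ := grid_exists hK hN y hy0 hy1
        have htin : t ∈ tset K p W := by
          refine ⟨fun i => ⟨add_nonneg ht0 (hpN.1.1 i).1, by linarith [(hup i).2]⟩,
            y, hyW, hlow⟩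
        have hFle : ∀ i, Fparam K p W i ≤ t + p i := Fparam_le hpN.1.2 htin
        have hFin : Fparam K p W ∈ convexHull ℝ Fs := by
          apply subset_convexHull
          rw [hFs]
          exact ⟨p, hpN, rfl⟩
        obtain ⟨g, hgp, hgF⟩ := exists_pareto_le hHullc hFin
        refine ⟨g, by rw [hGsj]; exact hgp, fun k => ?_⟩
        have h6 := (hup k).1
        have h7 := (hup k).2
        have h8 := hgF k
        have h9 := hFle k
        have h10 := hyv k
        have hrec := hcrec j
        have hβδ : β * δ ≤ δ := by nlinarith
        constructor
        · have : g k ≤ v k + β * (cseq β N j + δ) + 1/N := by linarith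
          calc g k ≤ v k + β * (cseq β N j + δ) + 1/N := this
            _ = v k + (cseq β N (j+1) + β * δ) := by rw [← hrec]; ring
            _ ≤ v k + (cseq β N (j+1) + δ) := by linarith
        · linarith
      -- P1 at j+1
      have P1 : ∀ δ : ℝ, 0 < δ → ∀ u ∈ G (j+1), ∃ v ∈ Vstar,
          ∀ k, v k ≤ u k + (β^(j+1) + δ) := by
        intro δ hδ u hu
        have hδ2 : 0 < δ/2 := by linarith
        have hAconv : Convex ℝ {x : Fin K → ℝ | ∃ v ∈ Vstar, ∀ k, v k ≤ x k + (β^(j+1) + δ)} := by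
          rintro x1 ⟨v1, hv1, hx1⟩ x2 ⟨v2, hv2, hx2⟩ a b ha hb hab
          have hv1U : v1 ∈ upset K Vstar := ⟨hVicc hv1, v1, hv1, le_refl _⟩
          have hv2U : v2 ∈ upset K Vstar := ⟨hVicc hv2, v2, hv2, le_refl _⟩
          obtain ⟨-, v, hvV, hvle⟩ := hVconv hv1U hv2U ha hb hab
          refine ⟨v, hvV, fun k => ?_⟩
          have h3 := hvle k
          have h4 := hx1 k
          have h5 := hx2 k
          simp only [Pi.add_apply, Pi.smul_apply, smul_eq_mul] at h3 ⊢
          have hc : a*(β^(j+1)+δ) + b*(β^(j+1)+δ) = (β^(j+1)+δ) := by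
            rw [← add_mul, hab, one_mul]
          nlinarith [mul_le_mul_of_nonneg_left h4 ha, mul_le_mul_of_nonneg_left h5 hb, hc]
        have hFsA : Fs ⊆ {x : Fin K → ℝ | ∃ v ∈ Vstar, ∀ k, v k ≤ x k + (β^(j+1) + δ)} := by
          rw [hFs]
          rintro x ⟨p, hpN, rfl⟩
          obtain ⟨y1, hy1W, hy1F⟩ := exists_W_le_Fparam ⟨1, htset1 p hpN⟩ hδ2
          have hy1psi : y1 ∈ psi K m n hn β r (G j) := pareto_subset _ hy1W
          obtain ⟨αy, hαy, Ry, hRy, hyeq⟩ := mem_psi_iff.mp hy1psi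
          choose Sv hSvV hSvle using fun a b => ih1 (δ/2) hδ2 (Ry a b) (hRy a b)
          have hu1 : ∀ k, val hn β r αy Sv k ≤ y1 k + β * (β^j + δ/2) := by
            intro k
            have h2 := val_le_of_pointwise (hn := hn) (r := r) hB0 hαy (R := Ry) (R' := Sv)
              (ε := β^j + δ/2) (fun a b k => hSvle a b k) k
            rw [hyeq]
            exact h2
          obtain ⟨v, hvV, hvle⟩ := hstar _ (val_mem_psi hαy hSvV)
          refine ⟨v, hvV, fun k => ?_⟩
          have h3 := hvle k
          have h4 := hu1 k
          have h5 := hy1F k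
          have hβδ : β * (δ/2) ≤ δ/2 := by nlinarith
          have hpow : β * β ^ j = β ^ (j+1) := by rw [pow_succ]; ring
          nlinarith
        have huC : u ∈ convexHull ℝ Fs := by
          rw [hGsj] at hu
          exact pareto_subset _ hu
        exact convexHull_min hFsA hAconv huC
      exact ⟨P1, P2, convexHull ℝ Fs, hHullc, hC0, hGsj⟩
  -- CONCLUSION
  intro j
  obtain ⟨h1, h2, -⟩ := main j
  have hcsj : cseq β N j = (1 / N) * ((1 - β ^ j) / (1 - β)) + β ^ j := hcs j
  refine ⟨?_, ?_, ?_⟩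
  · -- eDom (G j) Vstar ≤ β^j
    apply le_of_forall_pos_le_add
    intro ε hε
    apply csInf_le ⟨0, fun x hx => hx.1⟩
    refine ⟨by linarith [hpow0 j], ?_⟩
    intro u hu
    obtain ⟨v, hv, hvk⟩ := h1 ε hε u hu
    exact ⟨v, hv, hvk⟩
  · rw [← hcsj]
    apply le_of_forall_pos_le_add
    intro ε hε
    apply csInf_le ⟨0, fun x hx => hx.1⟩
    refine ⟨by linarith [hc0 j], ?_⟩
    intro u hu
    obtain ⟨g, hg, hgk⟩ := h2 ε hε u hu
    exact ⟨g, hg, fun i => (hgk i).1⟩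
  · rw [← hcsj]
    apply le_of_forall_pos_le_add
    intro ε hε
    have hc' : 0 ≤ cseq β N j + ε := by linarith [hc0 j]
    apply Metric.hausdorffDist_le_of_mem_dist hc'
    · rintro x ⟨⟨hx0, hx1⟩, v, hvV, hvx⟩
      obtain ⟨g, hgG, hgk⟩ := h2 ε hε v hvV
      refine ⟨fun k => max (min (v k + (cseq β N j + ε)) 1) (x k - (cseq β N j + ε)),
        ⟨⟨fun k => ?_, fun k => ?_⟩, g, hgG, fun k => ?_⟩, ?_⟩
      · simp only [Pi.zero_apply]
        have := (hVicc hvV).1 k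
        simp only [Pi.zero_apply] at this
        have hx0k := hx0 k
        simp only [Pi.zero_apply] at hx0k
        exact le_max_of_le_left (le_min (by linarith) (by norm_num))
      · simp only [Pi.one_apply]
        have hx1k := hx1 k
        simp only [Pi.one_apply] at hx1k
        exact max_le (min_le_right _ _) (by linarith)
      · exact le_max_of_le_left (le_min (hgk k).1 (hgk k).2)
      · rw [dist_pi_le_iff hc']
        intro k
        rw [Real.dist_eq, abs_sub_le_iff]
        have hvxk := hvx k
        constructor
        · have : x k - (cseq β N j + ε) ≤ max (min (v k + (cseq β N j + ε)) 1) (x k - (cseq β N j + ε)) :=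
            le_max_right _ _
          linarith
        · have h5 : min (v k + (cseq β N j + ε)) 1 ≤ x k + (cseq β N j + ε) :=
            le_trans (min_le_left _ _) (by linarith)
          have h6 : x k - (cseq β N j + ε) ≤ x k + (cseq β N j + ε) := by linarith
          have := max_le h5 h6
          linarith
    · rintro x ⟨⟨hx0, hx1⟩, g, hgG, hgx⟩
      obtain ⟨v, hvV, hvk⟩ := h1 ε hε g hgG
      refine ⟨fun k => max (v k) (x k - (cseq β N j + ε)),
        ⟨⟨fun k => ?_, fun k => ?_⟩, v, hvV, fun k => le_max_left _ _⟩, ?_⟩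
      · simp only [Pi.zero_apply]
        have := (hVicc hvV).1 k
        simp only [Pi.zero_apply] at this
        exact le_max_of_le_left this
      · simp only [Pi.one_apply]
        have h4 := (hVicc hvV).2 k
        simp only [Pi.one_apply] at h4
        have hx1k := hx1 k
        simp only [Pi.one_apply] at hx1k
        exact max_le h4 (by linarith)
      · rw [dist_pi_le_iff hc']
        intro k
        rw [Real.dist_eq, abs_sub_le_iff]
        have h3 := hvk k
        have h4 := hgx k
        have h5 := hcβ j
        constructor
        · have : x k - (cseq β N j + ε) ≤ max (v k) (x k - (cseq β N j + ε)) := le_max_right _ _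
          linarith
        · have h6 : v k ≤ x k + (cseq β N j + ε) := by linarith
          have h7 : x k - (cseq β N j + ε) ≤ x k + (cseq β N j + ε) := by linarith
          have := max_le h6 h7
          linarith
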